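/- Let k be a field and α, β ≥ 1 integers. Let A = k[u,v]/(uv), B = k[x,y]/(xy), and φ : A → B the k-algebra homomorphism with φ(u) = x^α and φ(v) = y^β. Let P : B → A be the A-linear projection onto the summand A·1 of the decomposition B = A·1 ⊕ ⊕_{l=1}^{α−1} A·x^l ⊕ ⊕_{m=1}^{β−1} A·y^m; explicitly, P(x^n) = u^{n/α} if α divides n and P(x^n) = 0 otherwise, P(y^n) = v^{n/β} if β divides n and P(y^n) = 0 otherwise. Then the map Θ : B → Hom_A(B, A) defined by Θ(b)(c) = P(bc) is an isomorphism of B-modules; in particular Hom_A(B, A) is a free B-module of rank one, generated by P. -/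

import Mathlib

open MvPolynomial

set_option synthInstance.maxHeartbeats 1000000
set_option maxHeartbeats 1000000

/-- The affine node `B = k[x,y]/(xy)`. -/
abbrev NodeRing (k : Type) [Field k] : Type :=
  MvPolynomial (Fin 2) k ⧸ (Ideal.span {(X 0 * X 1 : MvPolynomial (Fin 2) k)})

/-- The class of `x` in `k[x,y]/(xy)`. -/
noncomputable def nodeX (k : Type) [Field k] : NodeRing k :=
  Ideal.Quotient.mk _ (X 0)

/-- The class of `y` in `k[x,y]/(xy)`. -/
noncomputable def nodeY (k : Type) [Field k] : NodeRing k :=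
  Ideal.Quotient.mk _ (X 1)

/-- A second copy `A = k[u,v]/(uv)` of the affine node (with variables indexed by `Bool`). -/
abbrev NodeRing' (k : Type) [Field k] : Type :=
  MvPolynomial Bool k ⧸ (Ideal.span {(X false * X true : MvPolynomial Bool k)})

/-- The class of `u` in `k[u,v]/(uv)`. -/
noncomputable def nodeU (k : Type) [Field k] : NodeRing' k :=
  Ideal.Quotient.mk _ (X false)

/-- The class of `v` in `k[u,v]/(uv)`. -/
noncomputable def nodeV (k : Type) [Field k] : NodeRing' k :=
  Ideal.Quotient.mk _ (X true)

namespace Stmt7Aux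

variable (k : Type) [Field k]

/-! ### The embedding of the node into `k[t] × k[t]` -/

noncomputable def ψB : MvPolynomial (Fin 2) k →ₐ[k] Polynomial k × Polynomial k :=
  aeval ![(Polynomial.X, 0), (0, Polynomial.X)]

lemma ψB_X0 : ψB k (X 0) = (Polynomial.X, 0) := by simp [ψB]
lemma ψB_X1 : ψB k (X 1) = (0, Polynomial.X) := by simp [ψB]

lemma ψB_vanish : ∀ a ∈ Ideal.span {(X 0 * X 1 : MvPolynomial (Fin 2) k)}, ψB k a = 0 := by
  intro a ha
  rw [Ideal.mem_span_singleton] at ha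
  obtain ⟨c, rfl⟩ := ha
  rw [map_mul, map_mul, ψB_X0, ψB_X1]
  ext <;> simp

noncomputable def ιB : NodeRing k →ₐ[k] Polynomial k × Polynomial k :=
  Ideal.Quotient.liftₐ _ (ψB k) (ψB_vanish k)

lemma ιB_mk (F : MvPolynomial (Fin 2) k) :
    ιB k (Ideal.Quotient.mk _ F) = ψB k F := rfl

lemma ιB_X : ιB k (nodeX k) = (Polynomial.X, 0) := ψB_X0 k
lemma ιB_Y : ιB k (nodeY k) = (0, Polynomial.X) := ψB_X1 k

noncomputable def ψA : MvPolynomial Bool k →ₐ[k] Polynomial k × Polynomial k :=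
  aeval (fun b => if b then ((0 : Polynomial k), Polynomial.X) else (Polynomial.X, 0))

lemma ψA_false : ψA k (X false) = (Polynomial.X, 0) := by simp [ψA]
lemma ψA_true : ψA k (X true) = (0, Polynomial.X) := by simp [ψA]

lemma ψA_vanish : ∀ a ∈ Ideal.span {(X false * X true : MvPolynomial Bool k)}, ψA k a = 0 := by
  intro a ha
  rw [Ideal.mem_span_singleton] at ha
  obtain ⟨c, rfl⟩ := ha
  rw [map_mul, map_mul, ψA_false, ψA_true]
  ext <;> simp

noncomputable def ιA : NodeRing' k →ₐ[k] Polynomial k × Polynomial k :=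
  Ideal.Quotient.liftₐ _ (ψA k) (ψA_vanish k)

lemma ιA_U : ιA k (nodeU k) = (Polynomial.X, 0) := ψA_false k
lemma ιA_V : ιA k (nodeV k) = (0, Polynomial.X) := ψA_true k

/-! ### Coefficients of the embedding -/

lemma single_eq_iff (n : ℕ) (m : Fin 2 →₀ ℕ) (i : Fin 2) :
    (m = Finsupp.single i n) ↔ (m i = n ∧ m (1 - i) = 0) := by
  have hne : i ≠ 1 - i := by fin_cases i <;> decide
  constructor
  · rintro rfl; simp [Finsupp.single_eq_of_ne' hne]
  · rintro ⟨h0, h1⟩; ext j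
    have : j = i ∨ j = 1 - i := by fin_cases i <;> fin_cases j <;> simp_all <;> rfl
    rcases this with rfl | rfl
    · simp [h0]
    · simp [Finsupp.single_eq_of_ne' hne, h1]

lemma ψB_coeff_fst (F : MvPolynomial (Fin 2) k) (n : ℕ) :
    ((ψB k F).1).coeff n = MvPolynomial.coeff (Finsupp.single 0 n) F := by
  induction F using MvPolynomial.induction_on' with
  | add p q hp hq => simp [map_add, hp, hq]
  | monomial m a =>
    rw [show (ψB k) ((monomial m) a)
        = algebraMap k _ a * ((Polynomial.X, (0:Polynomial k)) ^ m 0 *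
            ((0:Polynomial k), Polynomial.X) ^ m 1) by
      rw [ψB, aeval_monomial, Finsupp.prod_fintype _ _ (fun i => pow_zero _),
        Fin.prod_univ_two]
      simp]
    rw [coeff_monomial]
    by_cases h1 : m 1 = 0
    · have : (m = Finsupp.single (0:Fin 2) n) ↔ (m 0 = n) := by
        rw [single_eq_iff]; simp [h1]
      simp only [this]
      simp only [Prod.fst_mul, Prod.pow_fst, h1, pow_zero, mul_one]
      by_cases h0 : m 0 = n
      · simp [h0, Polynomial.coeff_C_mul, Polynomial.coeff_X_pow]
      · simp [h0, Polynomial.coeff_C_mul, Polynomial.coeff_X_pow, Ne.symm h0]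
    · have : ¬ (m = Finsupp.single (0:Fin 2) n) := by
        rw [single_eq_iff]; simp; intro _; exact h1
      rw [if_neg this]
      simp [Prod.fst_mul, Prod.pow_fst, zero_pow h1]

lemma ψB_coeff_snd (F : MvPolynomial (Fin 2) k) (n : ℕ) :
    ((ψB k F).2).coeff n = MvPolynomial.coeff (Finsupp.single 1 n) F := by
  induction F using MvPolynomial.induction_on' with
  | add p q hp hq => simp [map_add, hp, hq]
  | monomial m a =>
    rw [show (ψB k) ((monomial m) a)
        = algebraMap k _ a * ((Polynomial.X, (0:Polynomial k)) ^ m 0 *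
            ((0:Polynomial k), Polynomial.X) ^ m 1) by
      rw [ψB, aeval_monomial, Finsupp.prod_fintype _ _ (fun i => pow_zero _),
        Fin.prod_univ_two]
      simp]
    rw [coeff_monomial]
    by_cases h0 : m 0 = 0
    · have : (m = Finsupp.single (1:Fin 2) n) ↔ (m 1 = n) := by
        rw [single_eq_iff]; simp [h0]
      simp only [this]
      simp only [Prod.snd_mul, Prod.pow_snd, h0, pow_zero, one_mul]
      by_cases h1 : m 1 = n
      · simp [h1, Polynomial.coeff_C_mul, Polynomial.coeff_X_pow]
      · simp [h1, Polynomial.coeff_C_mul, Polynomial.coeff_X_pow, Ne.symm h1]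
    · have : ¬ (m = Finsupp.single (1:Fin 2) n) := by
        rw [single_eq_iff]; simp; intro _; exact h0
      rw [if_neg this]
      simp [Prod.snd_mul, Prod.pow_snd, zero_pow h0]

lemma ψB_ker (F : MvPolynomial (Fin 2) k) (hF : ψB k F = 0) :
    F ∈ Ideal.span {(X 0 * X 1 : MvPolynomial (Fin 2) k)} := by
  have hXX : (X 0 * X 1 : MvPolynomial (Fin 2) k)
      = monomial (Finsupp.single 0 1 + Finsupp.single 1 1) 1 := by
    rw [X, X, monomial_mul, one_mul]
  have hspan : Ideal.span {(X 0 * X 1 : MvPolynomial (Fin 2) k)}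
      = Ideal.span ((fun s => monomial s (1:k)) ''
          {Finsupp.single 0 1 + Finsupp.single 1 1}) := by
    rw [Set.image_singleton, hXX]
  rw [hspan, mem_ideal_span_monomial_image]
  intro m hm
  refine ⟨_, Set.mem_singleton _, ?_⟩
  rw [MvPolynomial.mem_support_iff] at hm
  have hm0 : m 0 ≠ 0 := by
    intro h0
    apply hm
    have : m = Finsupp.single 1 (m 1) := by
      ext j; fin_cases j <;> simp [h0, Finsupp.single_eq_of_ne]
    rw [this, ← ψB_coeff_snd k F (m 1), hF]
    simp
  have hm1 : m 1 ≠ 0 := by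
    intro h0
    apply hm
    have : m = Finsupp.single 0 (m 0) := by
      ext j; fin_cases j <;> simp [h0, Finsupp.single_eq_of_ne]
    rw [this, ← ψB_coeff_fst k F (m 0), hF]
    simp
  rw [Finsupp.le_def]
  intro i
  fin_cases i <;> simp [Finsupp.single_eq_of_ne] <;> omega

lemma ιB_injective : Function.Injective (ιB k) := by
  rw [injective_iff_map_eq_zero]
  intro b hb
  obtain ⟨F, rfl⟩ := Ideal.Quotient.mk_surjective b
  rw [ιB_mk] at hb
  rw [Ideal.Quotient.eq_zero_iff_mem]
  exact ψB_ker k F hb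

/-! ### Ring lemmas in the node -/

lemma node_xy : nodeX k * nodeY k = 0 := by
  rw [nodeX, nodeY, ← map_mul, Ideal.Quotient.eq_zero_iff_mem]
  exact Ideal.subset_span rfl

lemma node_pow_xy (a b : ℕ) (ha : 1 ≤ a) (hb : 1 ≤ b) :
    nodeX k ^ a * nodeY k ^ b = 0 := by
  obtain ⟨a, rfl⟩ := Nat.exists_eq_add_of_le ha
  obtain ⟨b, rfl⟩ := Nat.exists_eq_add_of_le hb
  have h := node_xy k
  calc nodeX k ^ (1+a) * nodeY k ^ (1+b)
      = (nodeX k ^ a * nodeY k ^ b) * (nodeX k * nodeY k) := by ring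
    _ = 0 := by rw [h, mul_zero]

lemma top_of {S : Type} [CommRing S] [Algebra k S] [Algebra S (NodeRing k)]
    [IsScalarTower k S (NodeRing k)] (M : Submodule S (NodeRing k))
    (h1 : (1 : NodeRing k) ∈ M) (hx : ∀ c ∈ M, c * nodeX k ∈ M)
    (hy : ∀ c ∈ M, c * nodeY k ∈ M) (c : NodeRing k) : c ∈ M := by
  obtain ⟨F, rfl⟩ := Ideal.Quotient.mk_surjective c
  induction F using MvPolynomial.induction_on with
  | C a =>
    have h1' : (Ideal.Quotient.mk _ (C a) : NodeRing k) = algebraMap k (NodeRing k) a := rfl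
    rw [h1', Algebra.algebraMap_eq_smul_one]
    exact M.smul_of_tower_mem a h1
  | add p q hp hq => rw [map_add]; exact M.add_mem hp hq
  | mul_X p i hp =>
    rw [map_mul]
    fin_cases i
    · exact hx _ hp
    · exact hy _ hp

lemma exists_of_mulV (a : NodeRing' k) (h : nodeV k * a = 0) :
    ∃ g, a = nodeU k * g := by
  obtain ⟨F, rfl⟩ := Ideal.Quotient.mk_surjective a
  have h2 : (Ideal.Quotient.mk _ (X true * F) : NodeRing' k) = 0 := by
    rw [map_mul]; exact h
  rw [Ideal.Quotient.eq_zero_iff_mem, Ideal.mem_span_singleton] at h2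
  obtain ⟨G, hG⟩ := h2
  have hF : F = X false * G := by
    apply mul_left_cancel₀ (X_ne_zero (s := true) (R := k))
    rw [hG]; ring
  exact ⟨Ideal.Quotient.mk _ G, by rw [hF, map_mul]; rfl⟩

lemma exists_of_mulU (a : NodeRing' k) (h : nodeU k * a = 0) :
    ∃ g, a = nodeV k * g := by
  obtain ⟨F, rfl⟩ := Ideal.Quotient.mk_surjective a
  have h2 : (Ideal.Quotient.mk _ (X false * F) : NodeRing' k) = 0 := by
    rw [map_mul]; exact h
  rw [Ideal.Quotient.eq_zero_iff_mem, Ideal.mem_span_singleton] at h2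
  obtain ⟨G, hG⟩ := h2
  have hF : F = X true * G := by
    apply mul_left_cancel₀ (X_ne_zero (s := false) (R := k))
    rw [hG]; ring
  exact ⟨Ideal.Quotient.mk _ G, by rw [hF, map_mul]; rfl⟩

end Stmt7Aux

set_option maxHeartbeats 10000000 in
/-- Let `k` be a field, `α, β ≥ 1`, `A = k[u,v]/(uv)`, `B = k[x,y]/(xy)` and
`φ : A → B` the `k`-algebra homomorphism with `φ u = x^α`, `φ v = y^β` (encoded by an algebra
structure).  Let `P : B → A` be the `A`-linear projection onto the summand `A·1`, explicitly
`P (x^n) = u^(n/α)` if `α ∣ n` and `0` otherwise, and `P (y^n) = v^(n/β)` if `β ∣ n` and `0`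
otherwise.  Then `Θ : B → Hom_A(B, A)`, `Θ b = (c ↦ P (b * c))`, is an isomorphism of
`B`-modules, where `Hom_A(B, A)` carries the `B`-module structure `(b • f) c = f (b * c)`;
in particular `Hom_A(B, A)` is a free `B`-module of rank one generated by `P = Θ 1`. -/
theorem stmt7 (k : Type) [Field k] (α β : ℕ) (hα : 1 ≤ α) (hβ : 1 ≤ β)
    [Algebra (NodeRing' k) (NodeRing k)] [IsScalarTower k (NodeRing' k) (NodeRing k)]
    (hu : algebraMap (NodeRing' k) (NodeRing k) (nodeU k) = nodeX k ^ α)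
    (hv : algebraMap (NodeRing' k) (NodeRing k) (nodeV k) = nodeY k ^ β)
    (P : NodeRing k →ₗ[NodeRing' k] NodeRing' k)
    (hPx : ∀ n : ℕ, P (nodeX k ^ n) = if α ∣ n then nodeU k ^ (n / α) else 0)
    (hPy : ∀ n : ℕ, P (nodeY k ^ n) = if β ∣ n then nodeV k ^ (n / β) else 0)
    (Θ : NodeRing k → (NodeRing k →ₗ[NodeRing' k] NodeRing' k))
    (hΘ : ∀ b c, Θ b c = P (b * c)) :
    -- `Θ` is additive
    (∀ b b', Θ (b + b') = Θ b + Θ b') ∧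
    -- `Θ` intertwines the `B`-module structure `(b • f) c = f (b * c)` on `Hom_A(B, A)`
    (∀ b b' c, Θ (b' * b) c = Θ b (b' * c)) ∧
    -- `Θ` is bijective
    Function.Bijective Θ ∧
    -- `Hom_A(B, A)` is free of rank one over `B`, generated by `P`
    Θ 1 = P := by
  classical
  have hαpos : 0 < α := hα
  have hβpos : 0 < β := hβ
  have hP1 : P 1 = 1 := by simpa using hPx 0
  have hPφ : ∀ (a : NodeRing' k) (c : NodeRing k),
      P (algebraMap (NodeRing' k) (NodeRing k) a * c) = a * P c := by
    intro a c
    rw [← Algebra.smul_def, map_smul, smul_eq_mul]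
  -- `k`-span of the powers of `x` and `y` is everything
  have hTtop : Submodule.span k
      (Set.range (fun m : ℕ => nodeX k ^ m) ∪ Set.range (fun m : ℕ => nodeY k ^ m)) = ⊤ := by
    set T : Set (NodeRing k) :=
      Set.range (fun m : ℕ => nodeX k ^ m) ∪ Set.range (fun m : ℕ => nodeY k ^ m) with hT
    have hstep : ∀ (w : NodeRing k),
        (∀ m : ℕ, nodeX k ^ m * w ∈ Submodule.span k T) →
        (∀ m : ℕ, nodeY k ^ m * w ∈ Submodule.span k T) →
        ∀ c ∈ Submodule.span k T, c * w ∈ Submodule.span k T := by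
      intro w hxw hyw c hc
      have hle : Submodule.span k T ≤
          Submodule.comap (LinearMap.mulRight k w) (Submodule.span k T) := by
        rw [Submodule.span_le]
        rintro g (⟨m, rfl⟩ | ⟨m, rfl⟩)
        · exact hxw m
        · exact hyw m
      exact hle hc
    rw [eq_top_iff]
    rintro c -
    refine Stmt7Aux.top_of k (Submodule.span k T)
      (Submodule.subset_span (Set.mem_union_left _ ⟨0, pow_zero _⟩)) ?_ ?_ c
    · refine hstep (nodeX k) (fun m => ?_) (fun m => ?_)
      · rw [← pow_succ]
        exact Submodule.subset_span (Set.mem_union_left _ ⟨m + 1, rfl⟩)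
      · cases m with
        | zero =>
          rw [pow_zero, one_mul]
          exact Submodule.subset_span (Set.mem_union_left _ ⟨1, pow_one _⟩)
        | succ m =>
          rw [show nodeY k ^ (m+1) * nodeX k = nodeX k ^ 1 * nodeY k ^ (m+1) by ring,
            Stmt7Aux.node_pow_xy k 1 (m+1) le_rfl (by omega)]
          exact Submodule.zero_mem _
    · refine hstep (nodeY k) (fun m => ?_) (fun m => ?_)
      · cases m with
        | zero =>
          rw [pow_zero, one_mul]
          exact Submodule.subset_span (Set.mem_union_right _ ⟨1, pow_one _⟩)
        | succ m =>
          rw [show nodeX k ^ (m+1) * nodeY k = nodeX k ^ (m+1) * nodeY k ^ 1 by ring,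
            Stmt7Aux.node_pow_xy k (m+1) 1 (by omega) le_rfl]
          exact Submodule.zero_mem _
      · rw [← pow_succ]
        exact Submodule.subset_span (Set.mem_union_right _ ⟨m + 1, rfl⟩)
  -- key coefficient identities
  have key1 : ∀ (n : ℕ) (c : NodeRing k),
      ((Stmt7Aux.ιA k) (P c)).1.coeff n = ((Stmt7Aux.ιB k) c).1.coeff (α * n) := by
    intro n
    set F1 : NodeRing k →ₗ[k] k :=
      (Polynomial.lcoeff k n).comp ((LinearMap.fst k (Polynomial k) (Polynomial k)).comp
        ((Stmt7Aux.ιA k).toLinearMap.comp (P.restrictScalars k))) with hF1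
    set F2 : NodeRing k →ₗ[k] k :=
      (Polynomial.lcoeff k (α * n)).comp ((LinearMap.fst k (Polynomial k) (Polynomial k)).comp
        (Stmt7Aux.ιB k).toLinearMap) with hF2
    have hFF : F1 = F2 := by
      apply LinearMap.ext_on hTtop
      rintro c (⟨m, rfl⟩ | ⟨m, rfl⟩) <;>
        simp only [hF1, hF2, LinearMap.comp_apply, LinearMap.restrictScalars_apply,
          AlgHom.toLinearMap_apply, LinearMap.fst_apply, Polynomial.lcoeff_apply]
      · rw [hPx m, map_pow, Stmt7Aux.ιB_X]
        by_cases hd : α ∣ m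
        · rw [if_pos hd, map_pow, Stmt7Aux.ιA_U]
          obtain ⟨j, rfl⟩ := hd
          rw [Nat.mul_div_cancel_left j hαpos]
          simp only [Prod.pow_fst, Polynomial.coeff_X_pow]
          by_cases hn : n = j
          · subst hn; simp
          · rw [if_neg hn, if_neg (fun h => hn (Nat.eq_of_mul_eq_mul_left hαpos h))]
        · rw [if_neg hd, map_zero]
          simp only [Prod.pow_fst, Prod.fst_zero, Polynomial.coeff_zero,
            Polynomial.coeff_X_pow]
          rw [if_neg (fun h => hd ⟨n, h.symm⟩)]
      · rw [hPy m, map_pow, Stmt7Aux.ιB_Y]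
        by_cases hd : β ∣ m
        · rw [if_pos hd, map_pow, Stmt7Aux.ιA_V]
          simp only [Prod.pow_fst]
          by_cases hm : m = 0
          · subst hm
            simp only [Nat.zero_div, pow_zero]
            by_cases hn : n = 0
            · subst hn; simp
            · rw [Polynomial.coeff_one, Polynomial.coeff_one, if_neg hn,
                if_neg (Nat.mul_ne_zero (by omega) hn)]
          · have hm1 : m / β ≠ 0 := by
              have h2 := Nat.le_of_dvd (Nat.pos_of_ne_zero hm) hd
              have h3 := (Nat.one_le_div_iff (a := m) hβpos).mpr h2
              omega
            rw [zero_pow hm1, zero_pow hm]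
            simp
        · have hm : m ≠ 0 := fun h => hd (h ▸ dvd_zero β)
          rw [if_neg hd, map_zero]
          simp [zero_pow hm]
    intro c
    have := LinearMap.congr_fun hFF c
    simpa only [hF1, hF2, LinearMap.comp_apply, LinearMap.restrictScalars_apply,
      AlgHom.toLinearMap_apply, LinearMap.fst_apply, Polynomial.lcoeff_apply] using this
  have key2 : ∀ (n : ℕ) (c : NodeRing k),
      ((Stmt7Aux.ιA k) (P c)).2.coeff n = ((Stmt7Aux.ιB k) c).2.coeff (β * n) := by
    intro n
    set F1 : NodeRing k →ₗ[k] k :=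
      (Polynomial.lcoeff k n).comp ((LinearMap.snd k (Polynomial k) (Polynomial k)).comp
        ((Stmt7Aux.ιA k).toLinearMap.comp (P.restrictScalars k))) with hF1
    set F2 : NodeRing k →ₗ[k] k :=
      (Polynomial.lcoeff k (β * n)).comp ((LinearMap.snd k (Polynomial k) (Polynomial k)).comp
        (Stmt7Aux.ιB k).toLinearMap) with hF2
    have hFF : F1 = F2 := by
      apply LinearMap.ext_on hTtop
      rintro c (⟨m, rfl⟩ | ⟨m, rfl⟩) <;>
        simp only [hF1, hF2, LinearMap.comp_apply, LinearMap.restrictScalars_apply,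
          AlgHom.toLinearMap_apply, LinearMap.snd_apply, Polynomial.lcoeff_apply]
      · rw [hPx m, map_pow, Stmt7Aux.ιB_X]
        by_cases hd : α ∣ m
        · rw [if_pos hd, map_pow, Stmt7Aux.ιA_U]
          simp only [Prod.pow_snd]
          by_cases hm : m = 0
          · subst hm
            simp only [Nat.zero_div, pow_zero]
            by_cases hn : n = 0
            · subst hn; simp
            · rw [Polynomial.coeff_one, Polynomial.coeff_one, if_neg hn,
                if_neg (Nat.mul_ne_zero (by omega) hn)]
          · have hm1 : m / α ≠ 0 := by
              have h2 := Nat.le_of_dvd (Nat.pos_of_ne_zero hm) hd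
              have h3 := (Nat.one_le_div_iff (a := m) hαpos).mpr h2
              omega
            rw [zero_pow hm1, zero_pow hm]
            simp
        · have hm : m ≠ 0 := fun h => hd (h ▸ dvd_zero α)
          rw [if_neg hd, map_zero]
          simp [zero_pow hm]
      · rw [hPy m, map_pow, Stmt7Aux.ιB_Y]
        by_cases hd : β ∣ m
        · rw [if_pos hd, map_pow, Stmt7Aux.ιA_V]
          obtain ⟨j, rfl⟩ := hd
          rw [Nat.mul_div_cancel_left j hβpos]
          simp only [Prod.pow_snd, Polynomial.coeff_X_pow]
          by_cases hn : n = j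
          · subst hn; simp
          · rw [if_neg hn, if_neg (fun h => hn (Nat.eq_of_mul_eq_mul_left hβpos h))]
        · rw [if_neg hd, map_zero]
          simp only [Prod.pow_snd, Prod.snd_zero, Polynomial.coeff_zero,
            Polynomial.coeff_X_pow]
          rw [if_neg (fun h => hd ⟨n, h.symm⟩)]
    intro c
    have := LinearMap.congr_fun hFF c
    simpa only [hF1, hF2, LinearMap.comp_apply, LinearMap.restrictScalars_apply,
      AlgHom.toLinearMap_apply, LinearMap.snd_apply, Polynomial.lcoeff_apply] using this
  -- kernel of Θ is trivial
  have hker : ∀ b : NodeRing k, (∀ c, P (b * c) = 0) → b = 0 := by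
    intro b hb
    apply Stmt7Aux.ιB_injective k
    rw [map_zero]
    have hfst : ((Stmt7Aux.ιB k) b).1 = 0 := by
      ext n
      have hmod := Nat.mod_lt n hαpos
      have hsum : n + (α - n % α) = α * (n / α + 1) := by
        have h1 := Nat.mod_add_div n α
        rw [Nat.mul_add, Nat.mul_one]
        omega
      have h0 := key1 (n / α + 1) (b * nodeX k ^ (α - n % α))
      rw [hb _, map_zero, map_mul, map_pow, Stmt7Aux.ιB_X] at h0
      simp only [Prod.fst_zero, Polynomial.coeff_zero, Prod.fst_mul, Prod.pow_fst] at h0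
      rw [← hsum, Polynomial.coeff_mul_X_pow'] at h0
      rw [if_pos (Nat.le_add_left _ _), Nat.add_sub_cancel] at h0
      rw [Polynomial.coeff_zero]
      exact h0.symm
    have hsnd : ((Stmt7Aux.ιB k) b).2 = 0 := by
      ext n
      have hmod := Nat.mod_lt n hβpos
      have hsum : n + (β - n % β) = β * (n / β + 1) := by
        have h1 := Nat.mod_add_div n β
        rw [Nat.mul_add, Nat.mul_one]
        omega
      have h0 := key2 (n / β + 1) (b * nodeY k ^ (β - n % β))
      rw [hb _, map_zero, map_mul, map_pow, Stmt7Aux.ιB_Y] at h0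
      simp only [Prod.snd_zero, Polynomial.coeff_zero, Prod.snd_mul, Prod.pow_snd] at h0
      rw [← hsum, Polynomial.coeff_mul_X_pow'] at h0
      rw [if_pos (Nat.le_add_left _ _), Nat.add_sub_cancel] at h0
      rw [Polynomial.coeff_zero]
      exact h0.symm
    exact Prod.ext hfst hsnd
  -- surjectivity
  have hsurj : ∀ f : NodeRing k →ₗ[NodeRing' k] NodeRing' k, ∃ b, Θ b = f := by
    intro f
    have hfx : ∀ l, ∃ a, (1 ≤ l → l < α → f (nodeX k ^ l) = nodeU k * a) := by
      intro l
      by_cases hl : 1 ≤ l ∧ l < α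
      · have hxl : algebraMap (NodeRing' k) (NodeRing k) (nodeV k) * nodeX k ^ l = 0 := by
          rw [hv, show nodeY k ^ β * nodeX k ^ l = nodeX k ^ l * nodeY k ^ β from mul_comm _ _,
            Stmt7Aux.node_pow_xy k l β hl.1 hβ]
        have hv0 : nodeV k * f (nodeX k ^ l) = 0 := by
          rw [← smul_eq_mul, ← map_smul, Algebra.smul_def, hxl, map_zero]
        obtain ⟨g, hg⟩ := Stmt7Aux.exists_of_mulV k _ hv0
        exact ⟨g, fun _ _ => hg⟩
      · exact ⟨0, fun ha hb => absurd ⟨ha, hb⟩ hl⟩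
    choose gx hgx using hfx
    have hfy : ∀ m, ∃ a, (1 ≤ m → m < β → f (nodeY k ^ m) = nodeV k * a) := by
      intro m
      by_cases hm : 1 ≤ m ∧ m < β
      · have hym : algebraMap (NodeRing' k) (NodeRing k) (nodeU k) * nodeY k ^ m = 0 := by
          rw [hu, Stmt7Aux.node_pow_xy k α m hα hm.1]
        have hu0 : nodeU k * f (nodeY k ^ m) = 0 := by
          rw [← smul_eq_mul, ← map_smul, Algebra.smul_def, hym, map_zero]
        obtain ⟨g, hg⟩ := Stmt7Aux.exists_of_mulU k _ hu0
        exact ⟨g, fun _ _ => hg⟩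
      · exact ⟨0, fun ha hb => absurd ⟨ha, hb⟩ hm⟩
    choose gy hgy using hfy
    set b : NodeRing k := algebraMap (NodeRing' k) (NodeRing k) (f 1)
        + ∑ l ∈ Finset.Ico 1 α, algebraMap (NodeRing' k) (NodeRing k) (gx l) * nodeX k ^ (α - l)
        + ∑ m ∈ Finset.Ico 1 β, algebraMap (NodeRing' k) (NodeRing k) (gy m) * nodeY k ^ (β - m)
      with hbdef
    have hPzx : ∀ j, 1 ≤ j → j < α → P (nodeX k ^ j) = 0 := by
      intro j h1 h2
      rw [hPx, if_neg]
      intro hd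
      exact absurd (Nat.le_of_dvd (by omega) hd) (by omega)
    have hPzy : ∀ j, 1 ≤ j → j < β → P (nodeY k ^ j) = 0 := by
      intro j h1 h2
      rw [hPy, if_neg]
      intro hd
      exact absurd (Nat.le_of_dvd (by omega) hd) (by omega)
    have hPα : P (nodeX k ^ α) = nodeU k := by
      rw [hPx, if_pos dvd_rfl, Nat.div_self hαpos, pow_one]
    have hPβ : P (nodeY k ^ β) = nodeV k := by
      rw [hPy, if_pos dvd_rfl, Nat.div_self hβpos, pow_one]
    have hb1 : P b = f 1 := by
      rw [hbdef, map_add, map_add, map_sum, map_sum]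
      rw [show (algebraMap (NodeRing' k) (NodeRing k)) (f 1)
          = algebraMap (NodeRing' k) (NodeRing k) (f 1) * 1 from (mul_one _).symm, hPφ, hP1,
        mul_one]
      rw [Finset.sum_eq_zero (fun l hl => by
          rw [Finset.mem_Ico] at hl
          rw [hPφ, hPzx (α - l) (by omega) (by omega), mul_zero]),
        Finset.sum_eq_zero (fun m hm => by
          rw [Finset.mem_Ico] at hm
          rw [hPφ, hPzy (β - m) (by omega) (by omega), mul_zero]),
        add_zero, add_zero]
    have hbx : ∀ l, 1 ≤ l → l < α → P (b * nodeX k ^ l) = f (nodeX k ^ l) := by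
      intro l h1 h2
      rw [hbdef, add_mul, add_mul, Finset.sum_mul, Finset.sum_mul, map_add, map_add,
        map_sum, map_sum]
      rw [hPφ, hPzx l h1 h2, mul_zero, zero_add]
      have hzy : ∑ m ∈ Finset.Ico 1 β,
          P (algebraMap (NodeRing' k) (NodeRing k) (gy m) * nodeY k ^ (β - m) * nodeX k ^ l)
          = 0 :=
        Finset.sum_eq_zero (fun m hm => by
          rw [Finset.mem_Ico] at hm
          rw [mul_assoc, show nodeY k ^ (β - m) * nodeX k ^ l
              = nodeX k ^ l * nodeY k ^ (β - m) from mul_comm _ _,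
            Stmt7Aux.node_pow_xy k l (β - m) h1 (by omega), mul_zero, map_zero])
      rw [hzy, add_zero]
      rw [Finset.sum_congr rfl (fun l' _ => by
        rw [mul_assoc, ← pow_add, hPφ])]
      rw [Finset.sum_eq_single_of_mem l (Finset.mem_Ico.mpr ⟨h1, h2⟩)
        (fun l' hl' hne => by
          rw [Finset.mem_Ico] at hl'
          rw [hPx, if_neg, mul_zero]
          rintro ⟨t, ht⟩
          rcases Nat.lt_or_ge t 2 with h2t | h2t
          · interval_cases t <;> omega
          · have h3 := Nat.mul_le_mul_left α h2t
            omega)]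
      rw [show α - l + l = α by omega, hPα, mul_comm, ← hgx l h1 h2]
    have hby : ∀ m, 1 ≤ m → m < β → P (b * nodeY k ^ m) = f (nodeY k ^ m) := by
      intro m h1 h2
      rw [hbdef, add_mul, add_mul, Finset.sum_mul, Finset.sum_mul, map_add, map_add,
        map_sum, map_sum]
      rw [hPφ, hPzy m h1 h2, mul_zero, zero_add]
      have hzx : ∑ l ∈ Finset.Ico 1 α,
          P (algebraMap (NodeRing' k) (NodeRing k) (gx l) * nodeX k ^ (α - l) * nodeY k ^ m)
          = 0 :=
        Finset.sum_eq_zero (fun l hl => by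
          rw [Finset.mem_Ico] at hl
          rw [mul_assoc,
            Stmt7Aux.node_pow_xy k (α - l) m (by omega) h1, mul_zero, map_zero])
      rw [hzx, zero_add]
      rw [Finset.sum_congr rfl (fun m' _ => by
        rw [mul_assoc, ← pow_add, hPφ])]
      rw [Finset.sum_eq_single_of_mem m (Finset.mem_Ico.mpr ⟨h1, h2⟩)
        (fun m' hm' hne => by
          rw [Finset.mem_Ico] at hm'
          rw [hPy, if_neg, mul_zero]
          rintro ⟨t, ht⟩
          rcases Nat.lt_or_ge t 2 with h2t | h2t
          · interval_cases t <;> omega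
          · have h3 := Nat.mul_le_mul_left β h2t
            omega)]
      rw [show β - m + m = β by omega, hPβ, mul_comm, ← hgy m h1 h2]
    -- the generating set over `A`
    set Gset : Set (NodeRing k) := (fun l : ℕ => nodeX k ^ l) '' {l | l < α}
        ∪ (fun m : ℕ => nodeY k ^ m) '' {m | m < β} with hG
    have hxmem : ∀ l', l' ≤ α → nodeX k ^ l' ∈ Submodule.span (NodeRing' k) Gset := by
      intro l' hl'
      rcases Nat.lt_or_ge l' α with h | h
      · exact Submodule.subset_span (Set.mem_union_left _ ⟨l', h, rfl⟩)
      · have heq : l' = α := by omega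
        rw [heq, ← hu, Algebra.algebraMap_eq_smul_one]
        exact Submodule.smul_mem _ _
          (Submodule.subset_span (Set.mem_union_left _ ⟨0, hαpos, pow_zero _⟩))
    have hymem : ∀ m', m' ≤ β → nodeY k ^ m' ∈ Submodule.span (NodeRing' k) Gset := by
      intro m' hm'
      rcases Nat.lt_or_ge m' β with h | h
      · exact Submodule.subset_span (Set.mem_union_right _ ⟨m', h, rfl⟩)
      · have heq : m' = β := by omega
        rw [heq, ← hv, Algebra.algebraMap_eq_smul_one]
        exact Submodule.smul_mem _ _
          (Submodule.subset_span (Set.mem_union_left _ ⟨0, hαpos, pow_zero _⟩))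
    have hGtop : Submodule.span (NodeRing' k) Gset = ⊤ := by
      have hstep : ∀ (w : NodeRing k),
          (∀ g ∈ Gset, g * w ∈ Submodule.span (NodeRing' k) Gset) →
          ∀ c ∈ Submodule.span (NodeRing' k) Gset,
            c * w ∈ Submodule.span (NodeRing' k) Gset := by
        intro w hgw c hc
        have hle : Submodule.span (NodeRing' k) Gset ≤
            Submodule.comap (LinearMap.mulRight (NodeRing' k) w)
              (Submodule.span (NodeRing' k) Gset) := by
          rw [Submodule.span_le]
          intro g hg
          exact hgw g hg
        exact hle hc
      rw [eq_top_iff]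
      rintro c -
      have h1mem : (1 : NodeRing k) ∈ Submodule.span (NodeRing' k) Gset := by
        have := hxmem 0 (by omega)
        rwa [pow_zero] at this
      refine Stmt7Aux.top_of k (Submodule.span (NodeRing' k) Gset) h1mem ?_ ?_ c
      · refine hstep (nodeX k) ?_
        rintro g (⟨l, hl, rfl⟩ | ⟨m, hm, rfl⟩)
        · have hl' : l < α := hl
          show nodeX k ^ l * nodeX k ∈ Submodule.span (NodeRing' k) Gset
          rw [← pow_succ]
          exact hxmem (l + 1) (by omega)
        · show nodeY k ^ m * nodeX k ∈ Submodule.span (NodeRing' k) Gset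
          cases m with
          | zero =>
            rw [pow_zero, one_mul, ← pow_one (nodeX k)]
            exact hxmem 1 hα
          | succ m =>
            rw [show nodeY k ^ (m+1) * nodeX k = nodeX k ^ 1 * nodeY k ^ (m+1) by ring,
              Stmt7Aux.node_pow_xy k 1 (m+1) le_rfl (by omega)]
            exact Submodule.zero_mem _
      · refine hstep (nodeY k) ?_
        rintro g (⟨l, hl, rfl⟩ | ⟨m, hm, rfl⟩)
        · show nodeX k ^ l * nodeY k ∈ Submodule.span (NodeRing' k) Gset
          cases l with
          | zero =>
            rw [pow_zero, one_mul, ← pow_one (nodeY k)]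
            exact hymem 1 hβ
          | succ l =>
            rw [show nodeX k ^ (l+1) * nodeY k = nodeX k ^ (l+1) * nodeY k ^ 1 by ring,
              Stmt7Aux.node_pow_xy k (l+1) 1 (by omega) le_rfl]
            exact Submodule.zero_mem _
        · have hm' : m < β := hm
          show nodeY k ^ m * nodeY k ∈ Submodule.span (NodeRing' k) Gset
          rw [← pow_succ]
          exact hymem (m + 1) (by omega)
    have hgen : ∀ c ∈ Gset, P (b * c) = f c := by
      rintro c (⟨l, hl, rfl⟩ | ⟨m, hm, rfl⟩)
      · rcases Nat.eq_zero_or_pos l with rfl | h1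
        · simp only [pow_zero, mul_one]
          exact hb1
        · exact hbx l h1 hl
      · rcases Nat.eq_zero_or_pos m with rfl | h1
        · simp only [pow_zero, mul_one]
          exact hb1
        · exact hby m h1 hm
    have hL : P.comp (LinearMap.mulLeft (NodeRing' k) b) = f :=
      LinearMap.ext_on hGtop (fun c hc => by simpa using hgen c hc)
    exact ⟨b, LinearMap.ext fun c => by rw [hΘ]; exact LinearMap.congr_fun hL c⟩
  refine ⟨?_, ?_, ⟨?_, hsurj⟩, ?_⟩
  · intro b b'
    apply LinearMap.ext
    intro c
    simp only [hΘ, LinearMap.add_apply, add_mul, map_add]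
  · intro b b' c
    rw [hΘ, hΘ, mul_comm b' b, mul_assoc]
  · intro b b' hbb'
    have hz : ∀ c, P ((b - b') * c) = 0 := by
      intro c
      have h1 := hΘ b c
      have h2 := hΘ b' c
      rw [hbb'] at h1
      rw [sub_mul, map_sub, ← h1, ← h2, sub_self]
    exact sub_eq_zero.mp (hker _ hz)
  · apply LinearMap.ext
    intro c
    rw [hΘ, one_mul]
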